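/- Let F : 𝔽₂ⁿ → 𝔽₂^m be a vectorial Boolean function with m ≥ n. Then |B(F)| ≤ 2^m − 2^{m-n}. Moreover, if |B(F)| = 2^m − 2^{m-n}, then F is an embedding (i.e., injective) and for every λ ∉ B(F) the component F_λ is constant (so the remaining 2^{m-n} components are constant). -/
import Mathlib

/-- The vector space 𝔽₂ⁿ. -/
abbrev BV (n : ℕ) := Fin n → ZMod 2

/-- First-order derivative of a Boolean function: `D_a f (x) = f (x + a) + f x`. -/
def bderiv {n : ℕ} (f : BV n → ZMod 2) (a : BV n) : BV n → ZMod 2 :=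
  fun x => f (x + a) + f x

/-- Weight of a Boolean function: the number of inputs mapped to 1. -/
noncomputable def bwt {n : ℕ} (f : BV n → ZMod 2) : ℕ := {x | f x = 1}.ncard

/-- `𝔉(f) = Σ_x (-1)^(f x)`. -/
def fou {n : ℕ} (f : BV n → ZMod 2) : ℤ := ∑ x : BV n, (-1 : ℤ) ^ (f x).val

/-- Component function `F_λ(x) = λ · F(x)` (dot product over 𝔽₂). -/
def cmpnt {n m : ℕ} (F : BV n → BV m) (l : BV m) : BV n → ZMod 2 :=
  fun x => ∑ i, l i * F x i

/-- A Boolean function on n variables is balanced if its weight is `2^(n-1)`. -/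
def IsBalanced {n : ℕ} (f : BV n → ZMod 2) : Prop := bwt f = 2 ^ (n - 1)

lemma neg_one_pow_one_add (a : ZMod 2) : (-1:ℤ)^((a+1 : ZMod 2)).val = -(-1:ℤ)^a.val := by
  revert a; decide

lemma char_sum {m : ℕ} (v : BV m) :
    ∑ l : BV m, (-1:ℤ)^((∑ i, l i * v i).val) = if v = 0 then 2^m else 0 := by
  split_ifs with h
  · subst h; simp [Finset.card_univ]
  · obtain ⟨j, hj⟩ : ∃ j, v j ≠ 0 := by
      by_contra hc; push_neg at hc; exact h (funext hc)
    have hj1 : v j = 1 := by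
      have : ∀ a : ZMod 2, a ≠ 0 → a = 1 := by decide
      exact this _ hj
    set e : BV m := Pi.single j 1 with he
    have key : ∀ l : BV m, (∑ i, (l + e) i * v i) = (∑ i, l i * v i) + 1 := by
      intro l
      have : ∑ i, e i * v i = 1 := by
        rw [Finset.sum_eq_single j]
        · simp [he, hj1]
        · intro b _ hb; simp [he, Pi.single_apply, hb]
        · simp
      simp only [Pi.add_apply, add_mul, Finset.sum_add_distrib, this]
    have hb : ∑ l : BV m, (-1:ℤ)^((∑ i, l i * v i).val)
        = ∑ l : BV m, (-1:ℤ)^((∑ i, (l + e) i * v i).val) :=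
      (Fintype.sum_equiv (Equiv.addRight e)
        (fun l => (-1:ℤ)^((∑ i, (l + e) i * v i).val))
        (fun l => (-1:ℤ)^((∑ i, l i * v i).val)) (fun x => rfl)).symm
    have hneg : ∑ l : BV m, (-1:ℤ)^((∑ i, (l + e) i * v i).val)
        = -∑ l : BV m, (-1:ℤ)^((∑ i, l i * v i).val) := by
      rw [← Finset.sum_neg_distrib]
      exact Finset.sum_congr rfl fun l _ => by rw [key l, neg_one_pow_one_add]
    linarith [hb, hneg]

lemma bwt_eq {n : ℕ} (f : BV n → ZMod 2) :
    bwt f = (Finset.univ.filter (fun x => f x = 1)).card := by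
  rw [bwt, ← Set.ncard_coe_finset]
  congr 1; ext x; simp

lemma fou_eq {n : ℕ} (f : BV n → ZMod 2) : fou f = 2^n - 2 * bwt f := by
  have hpt : ∀ a : ZMod 2, (-1:ℤ)^a.val = 1 - 2 * (if a = 1 then 1 else 0) := by decide
  rw [fou, bwt_eq]
  calc ∑ x : BV n, (-1:ℤ)^(f x).val
      = ∑ x : BV n, (1 - 2 * (if f x = 1 then 1 else 0)) :=
        Finset.sum_congr rfl fun x _ => hpt (f x)
    _ = 2^n - 2 * ((Finset.univ.filter (fun x => f x = 1)).card : ℤ) := by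
        rw [Finset.sum_sub_distrib, ← Finset.mul_sum, Finset.sum_boole, Finset.sum_const,
          Finset.card_univ]
        simp [Fintype.card_fun]

lemma balanced_iff_fou {n : ℕ} (hn : 1 ≤ n) (f : BV n → ZMod 2) :
    IsBalanced f ↔ fou f = 0 := by
  rw [IsBalanced, fou_eq]
  constructor
  · intro h; rw [h]
    have : (2:ℤ)^n = 2 * 2^(n-1) := by
      rw [← pow_succ']
      congr 1; omega
    push_cast
    rw [this]; ring
  · intro h
    have h2 : (2:ℤ) * bwt f = 2^n := by linarith
    have : (2:ℤ)^n = 2 * 2^(n-1) := by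
      rw [← pow_succ']; congr 1; omega
    rw [this] at h2
    have : (bwt f : ℤ) = 2^(n-1) := by linarith
    exact_mod_cast this

lemma abs_fou_le {n : ℕ} (f : BV n → ZMod 2) : |fou f| ≤ 2^n := by
  calc |fou f| ≤ ∑ x : BV n, |(-1:ℤ)^(f x).val| := Finset.abs_sum_le_sum_abs _ _
    _ = 2^n := by simp [abs_pow, Finset.card_univ, Fintype.card_fun]

lemma fou_sq_le {n : ℕ} (f : BV n → ZMod 2) : fou f ^ 2 ≤ 2^(2*n) := by
  have := abs_fou_le f
  have h2 : fou f ^2 ≤ (2^n:ℤ)^2 := sq_le_sq' (by linarith [abs_le.mp this]) (abs_le.mp this).2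
  calc fou f ^2 ≤ (2^n:ℤ)^2 := h2
    _ = 2^(2*n) := by rw [← pow_mul]; ring_nf

lemma const_of_fou_sq {n : ℕ} (f : BV n → ZMod 2) (h : fou f ^ 2 = 2^(2*n)) :
    ∃ c, ∀ x, f x = c := by
  have he := fou_eq f
  have hw : (bwt f : ℤ) = 0 ∨ (bwt f : ℤ) = 2^n := by
    have h2 : (2^n - 2 * (bwt f:ℤ))^2 = (2^n)^2 := by
      rw [← he, h, ← pow_mul]; ring_nf
    have : (bwt f:ℤ) * ((bwt f:ℤ) - 2^n) = 0 := by nlinarith [h2]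
    rcases mul_eq_zero.mp this with h0 | h0
    · left; exact h0
    · right; linarith
  rcases hw with h0 | h0
  · refine ⟨0, fun x => ?_⟩
    have hb : bwt f = 0 := by exact_mod_cast h0
    rw [bwt_eq] at hb
    have := Finset.card_eq_zero.mp hb
    have hx : x ∉ Finset.univ.filter (fun x => f x = 1) := by rw [this]; simp
    simp only [Finset.mem_filter, Finset.mem_univ, true_and] at hx
    have : ∀ a : ZMod 2, a ≠ 1 → a = 0 := by decide
    exact this _ hx
  · refine ⟨1, fun x => ?_⟩
    have hb : bwt f = 2^n := by exact_mod_cast h0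
    rw [bwt_eq] at hb
    have hsub : Finset.univ.filter (fun x => f x = 1) = Finset.univ := by
      apply Finset.eq_univ_of_card
      rw [hb, Fintype.card_fun]; simp
    have hx : x ∈ Finset.univ.filter (fun x => f x = 1) := by rw [hsub]; simp
    simpa using hx

lemma parseval {n m : ℕ} (F : BV n → BV m) :
    ∑ l : BV m, fou (cmpnt F l) ^ 2
      = 2^m * ((Finset.univ.filter (fun p : BV n × BV n => F p.1 = F p.2)).card : ℤ) := by
  have hmul : ∀ a b : ZMod 2, (-1:ℤ)^a.val * (-1:ℤ)^b.val = (-1:ℤ)^(a+b).val := by decide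
  have step1 : ∀ l : BV m, fou (cmpnt F l) ^ 2
      = ∑ p : BV n × BV n, (-1:ℤ)^((∑ i, l i * (F p.1 + F p.2) i).val) := by
    intro l
    rw [sq, fou, Finset.sum_mul_sum, ← Finset.sum_product']
    apply Finset.sum_congr rfl
    intro p _
    rw [hmul]
    congr 2
    rw [cmpnt, cmpnt, ← Finset.sum_add_distrib]
    exact Finset.sum_congr rfl fun i _ => by simp [mul_add]
  calc ∑ l : BV m, fou (cmpnt F l) ^ 2
      = ∑ l : BV m, ∑ p : BV n × BV n, (-1:ℤ)^((∑ i, l i * (F p.1 + F p.2) i).val) :=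
        Finset.sum_congr rfl fun l _ => step1 l
    _ = ∑ p : BV n × BV n, ∑ l : BV m, (-1:ℤ)^((∑ i, l i * (F p.1 + F p.2) i).val) :=
        Finset.sum_comm
    _ = ∑ p : BV n × BV n, if F p.1 + F p.2 = 0 then (2:ℤ)^m else 0 :=
        Finset.sum_congr rfl fun p _ => char_sum _
    _ = ∑ p : BV n × BV n, if F p.1 = F p.2 then (2:ℤ)^m else 0 := by
        apply Finset.sum_congr rfl
        intro p _
        congr 1
        simp only [eq_iff_iff]
        have hz : ∀ x y : ZMod 2, (x + y = 0 ↔ x = y) := by decide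
        constructor
        · intro h; funext i
          exact (hz _ _).mp (congrFun h i)
        · intro h; funext i
          exact (hz _ _).mpr (congrFun h i)
    _ = 2^m * ((Finset.univ.filter (fun p : BV n × BV n => F p.1 = F p.2)).card : ℤ) := by
        rw [Finset.sum_ite, Finset.sum_const, Finset.sum_const]
        simp [mul_comm]

/-- For m ≥ n, |B(F)| ≤ 2^m − 2^(m-n); if equality holds then F is an embedding
    and every component which is not balanced is constant. -/
theorem balanced_components (n m : ℕ) (hn : 1 ≤ n) (hnm : n ≤ m) (F : BV n → BV m) :
    {l : BV m | IsBalanced (cmpnt F l)}.ncard ≤ 2 ^ m - 2 ^ (m - n)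
    ∧ ({l : BV m | IsBalanced (cmpnt F l)}.ncard = 2 ^ m - 2 ^ (m - n) →
        Function.Injective F
        ∧ ∀ l : BV m, l ∉ {l : BV m | IsBalanced (cmpnt F l)} →
            ∃ c, ∀ x, cmpnt F l x = c) := by
  classical
  set Bf : Finset (BV m) := Finset.univ.filter (fun l => fou (cmpnt F l) = 0) with hBf
  set S : Finset (BV m) := Finset.univ.filter (fun l => ¬ fou (cmpnt F l) = 0) with hS
  have hB : {l : BV m | IsBalanced (cmpnt F l)}.ncard = Bf.card := by
    rw [← Set.ncard_coe_finset]
    congr 1; ext l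
    simp [hBf, balanced_iff_fou hn]
  have hsum : Bf.card + S.card = 2^m := by
    rw [hBf, hS, Finset.card_filter_add_card_filter_not, Finset.card_univ]
    simp [Fintype.card_fun]
  set C := (Finset.univ.filter (fun p : BV n × BV n => F p.1 = F p.2)).card with hC
  have hdiag : (Finset.univ.image (fun x : BV n => (x, x)))
      ⊆ Finset.univ.filter (fun p : BV n × BV n => F p.1 = F p.2) := by
    intro p hp
    simp only [Finset.mem_image, Finset.mem_univ, true_and] at hp
    obtain ⟨x, hx⟩ := hp
    simp [← hx]
  have hdiagcard : (Finset.univ.image (fun x : BV n => (x, x))).card = 2^n := by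
    rw [Finset.card_image_of_injective _ (fun a b h => (Prod.mk.injEq _ _ _ _).mp h |>.1),
      Finset.card_univ]
    simp [Fintype.card_fun]
  have hCge : 2^n ≤ C := by
    rw [hC, ← hdiagcard]
    exact Finset.card_le_card hdiag
  have hT : ∑ l : BV m, fou (cmpnt F l) ^ 2 = ∑ l ∈ S, fou (cmpnt F l) ^ 2 := by
    rw [hS]
    rw [Finset.sum_filter_of_ne]
    intro l _ h
    intro h0; rw [h0] at h; simp at h
  have hTle : ∑ l ∈ S, fou (cmpnt F l) ^ 2 ≤ (S.card : ℤ) * 2^(2*n) := by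
    calc ∑ l ∈ S, fou (cmpnt F l) ^ 2 ≤ ∑ l ∈ S, (2:ℤ)^(2*n) :=
          Finset.sum_le_sum fun l _ => fou_sq_le _
      _ = (S.card : ℤ) * 2^(2*n) := by rw [Finset.sum_const]; simp
  have hTlow : (2:ℤ)^m * 2^n ≤ ∑ l ∈ S, fou (cmpnt F l) ^ 2 := by
    rw [← hT, parseval]
    have : (2:ℤ)^n ≤ (C:ℤ) := by exact_mod_cast hCge
    have hp : (0:ℤ) < 2^m := by positivity
    nlinarith
  have hSlow : 2^(m-n) ≤ S.card := by
    have h1 : (2:ℤ)^(m+n) ≤ (S.card:ℤ) * 2^(2*n) := by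
      calc (2:ℤ)^(m+n) = 2^m * 2^n := (pow_add 2 m n)
        _ ≤ _ := le_trans hTlow hTle
    have h2 : (2:ℕ)^(m+n) ≤ S.card * 2^(2*n) := by exact_mod_cast h1
    have h3 : 2^(m-n) * 2^(2*n) = 2^(m+n) := by
      rw [← pow_add]; congr 1; omega
    have := h3 ▸ h2
    exact Nat.le_of_mul_le_mul_right this (by positivity)
  have hpowle : (2:ℕ)^(m-n) ≤ 2^m := Nat.pow_le_pow_right (by norm_num) (by omega)
  rw [hB]
  constructor
  · omega
  · intro heq
    have hScard : S.card = 2^(m-n) := by omega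
    -- T = 2^(m+n) exactly
    have hTup : ∑ l ∈ S, fou (cmpnt F l) ^ 2 ≤ (2:ℤ)^m * 2^n := by
      calc ∑ l ∈ S, fou (cmpnt F l) ^ 2 ≤ (S.card : ℤ) * 2^(2*n) := hTle
        _ = (2:ℤ)^(m-n) * 2^(2*n) := by rw [hScard]; push_cast; ring
        _ = (2:ℤ)^m * 2^n := by rw [← pow_add, ← pow_add]; congr 1; omega
    have hTeq : ∑ l ∈ S, fou (cmpnt F l) ^ 2 = (2:ℤ)^m * 2^n := le_antisymm hTup hTlow
    -- C = 2^n
    have hCeq : C = 2^n := by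
      have hp2 : (2:ℤ)^m * (C:ℤ) = 2^m * 2^n := by
        rw [← parseval F, hT, hTeq]
      have : (C:ℤ) = 2^n := by
        have hpos : (0:ℤ) < 2^m := by positivity
        exact mul_left_cancel₀ (ne_of_gt hpos) hp2
      exact_mod_cast this
    -- injectivity
    have hinj : Function.Injective F := by
      have hsetseq : Finset.univ.filter (fun p : BV n × BV n => F p.1 = F p.2)
          = Finset.univ.image (fun x : BV n => (x, x)) :=
        (Finset.eq_of_subset_of_card_le hdiag (by rw [hdiagcard, ← hC, hCeq])).symm
      intro a b hab
      have : (a, b) ∈ Finset.univ.filter (fun p : BV n × BV n => F p.1 = F p.2) := by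
        simp [hab]
      rw [hsetseq] at this
      simp only [Finset.mem_image, Finset.mem_univ, true_and] at this
      obtain ⟨x, hx⟩ := this
      have h1 := (Prod.mk.injEq _ _ _ _).mp hx
      rw [← h1.1, ← h1.2]
    refine ⟨hinj, fun l hl => ?_⟩
    have hlS : l ∈ S := by
      rw [hS]; simp only [Finset.mem_filter, Finset.mem_univ, true_and]
      intro h0
      exact hl ((balanced_iff_fou hn _).mpr h0)
    -- each term on S equals 2^(2n)
    have hterm : fou (cmpnt F l) ^ 2 = 2^(2*n) := by
      have hall := (Finset.sum_eq_sum_iff_of_le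
        (fun i (_ : i ∈ S) => fou_sq_le (cmpnt F i))).mp ?_
      · exact hall l hlS
      · rw [hTeq, Finset.sum_const, hScard]
        rw [nsmul_eq_mul]
        push_cast
        rw [← pow_add, ← pow_add]
        congr 1; omega
    exact const_of_fou_sq _ hterm
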